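/- Fix integers j and k with 1 ≤ j ≤ k. For π chosen uniformly at random from PF_n, as n → ∞, n · P(π₁ = j and K_π = k) converges to e^{−k} k^{k−1}/k!. -/

import Mathlib

/-- A parking function of size `n`, encoded as a list of length `n` with entries in
`{1, …, n}` such that for each `1 ≤ i ≤ n` at least `i` entries are `≤ i`. -/
def IsPFList (n : ℕ) (l : List ℕ) : Prop :=
  l.length = n ∧ (∀ x ∈ l, 1 ≤ x ∧ x ≤ n) ∧
  ∀ i : ℕ, 1 ≤ i → i ≤ n → i ≤ (l.filter (fun x => x ≤ i)).length


/-- `Kpi n l` is the largest `k` such that replacing the first entry of `l` by `k`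
gives a parking function of size `n`. -/
noncomputable def Kpi (n : ℕ) (l : List ℕ) : ℕ :=
  sSup {k : ℕ | IsPFList n (k :: l.tail)}

namespace PFAux

def cnt (i : ℕ) (l : List ℕ) : ℕ := (l.filter (fun x => x ≤ i)).length

lemma isPF_iff (n : ℕ) (l : List ℕ) : IsPFList n l ↔
    l.length = n ∧ (∀ x ∈ l, 1 ≤ x ∧ x ≤ n) ∧
      ∀ i : ℕ, 1 ≤ i → i ≤ n → i ≤ cnt i l := Iff.rfl

lemma cnt_cons (i a : ℕ) (t : List ℕ) :
    cnt i (a :: t) = cnt i t + if a ≤ i then 1 else 0 := by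
  simp only [cnt, List.filter_cons]
  by_cases h : a ≤ i <;> simp [h]

lemma cnt_le_length (i : ℕ) (l : List ℕ) : cnt i l ≤ l.length :=
  List.length_filter_le _ _

lemma cnt_mono {i j : ℕ} (h : i ≤ j) (l : List ℕ) : cnt i l ≤ cnt j l := by
  simp only [cnt, ← List.countP_eq_length_filter]
  exact List.countP_mono_left (fun x _ hx => by
    simp only [decide_eq_true_eq] at *; omega)

lemma head_mono {n m j : ℕ} {t : List ℕ} (h : IsPFList n (m :: t)) (hj : 1 ≤ j)
    (hjm : j ≤ m) : IsPFList n (j :: t) := by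
  obtain ⟨h1, h2, h3⟩ := h
  refine ⟨h1, ?_, ?_⟩
  · intro x hx
    rcases List.mem_cons.1 hx with rfl | hx
    · exact ⟨hj, le_trans hjm (h2 m (List.mem_cons_self)).2⟩
    · exact h2 x (List.mem_cons_of_mem _ hx)
  · intro i hi1 hi2
    have := h3 i hi1 hi2
    show i ≤ cnt i (j :: t)
    have this2 : i ≤ cnt i (m :: t) := this
    rw [cnt_cons] at this2 ⊢
    clear this
    by_cases hm : m ≤ i
    · have hji : j ≤ i := le_trans hjm hm
      simp [hm] at this2; simp [hji]; omega
    · simp [hm] at this2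
      exact le_trans this2 (Nat.le_add_right _ _)

/-- the set of allowed first entries -/
lemma mem_KS_le {n m : ℕ} {t : List ℕ} (h : IsPFList n (m :: t)) : 1 ≤ m ∧ m ≤ n :=
  h.2.1 m (List.mem_cons_self)

def TailSet (n k : ℕ) : Set (List ℕ) :=
  {t | t.length = n - 1 ∧ (∀ x ∈ t, 1 ≤ x ∧ x ≤ n) ∧
    (∀ i, 1 ≤ i → i < k → i ≤ cnt i t) ∧ cnt k t = k - 1 ∧
    (∀ i, k < i → i ≤ n → i - 1 ≤ cnt i t)}

lemma tail_cons_pf {n k : ℕ} {t : List ℕ} (hk : 1 ≤ k) (hkn : k ≤ n)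
    (ht : t ∈ TailSet n k) : IsPFList n (k :: t) := by
  obtain ⟨hl, he, h1, h2, h3⟩ := ht
  refine ⟨by simp [hl]; omega, ?_, ?_⟩
  · intro x hx
    rcases List.mem_cons.1 hx with rfl | hx
    · exact ⟨hk, hkn⟩
    · exact he x hx
  · intro i hi1 hi2
    show i ≤ cnt i (k :: t)
    rw [cnt_cons]
    rcases lt_trichotomy i k with h | rfl | h
    · have := h1 i hi1 h
      simp [Nat.not_le.2 h]; omega
    · simp; omega
    · have := h3 i h hi2
      simp [le_of_lt h]; omega

lemma main_set_eq {j k n : ℕ} (hj : 1 ≤ j) (hjk : j ≤ k) (hkn : k ≤ n) :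
    {l : List ℕ | IsPFList n l ∧ l.headI = j ∧ Kpi n l = k} =
      (fun t => j :: t) '' TailSet n k := by
  have hk1 : 1 ≤ k := le_trans hj hjk
  have hn1 : 1 ≤ n := le_trans hk1 hkn
  ext l
  simp only [Set.mem_setOf_eq, Set.mem_image]
  constructor
  · rintro ⟨hpf, hhead, hK⟩
    have hlen : l.length = n := hpf.1
    obtain ⟨a, t, rfl⟩ : ∃ a t, l = a :: t := by
      cases l with
      | nil => simp at hlen; omega
      | cons a t => exact ⟨a, t, rfl⟩
    have hhead' : a = j := by simpa using hhead
    refine ⟨t, ?_, by rw [hhead']⟩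
    -- analyze the sup
    have htail : (a :: t).tail = t := rfl
    rw [Kpi, htail] at hK
    set S : Set ℕ := {m | IsPFList n (m :: t)} with hS
    have hbdd : BddAbove S := ⟨n, fun m hm => (mem_KS_le hm).2⟩
    have hne : S.Nonempty := ⟨a, hpf⟩
    have hkS : k ∈ S := hK ▸ Nat.sSup_mem hne hbdd
    have hnotS : ∀ m, k < m → m ∉ S := by
      intro m hm hmS
      have := le_csSup hbdd hmS
      omega
    have hkt : IsPFList n (k :: t) := hkS
    have hlt : t.length = n - 1 := by
      have := hkt.1; simp at this; omega
    have hent : ∀ x ∈ t, 1 ≤ x ∧ x ≤ n := fun x hx =>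
      hkt.2.1 x (List.mem_cons_of_mem _ hx)
    have hcond : ∀ i, 1 ≤ i → i ≤ n → i ≤ cnt i (k :: t) := hkt.2.2
    have hlow : ∀ i, 1 ≤ i → i < k → i ≤ cnt i t := by
      intro i hi1 hik
      have := hcond i hi1 (le_trans (le_of_lt hik) hkn)
      rw [cnt_cons] at this
      simp [Nat.not_le.2 hik] at this
      omega
    have hka : k - 1 ≤ cnt k t := by
      have := hcond k hk1 hkn
      rw [cnt_cons] at this
      simp at this; omega
    have hkb : cnt k t ≤ k - 1 := by
      by_contra hcon
      have hck : k ≤ cnt k t := by omega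
      rcases eq_or_lt_of_le hkn with rfl | hlt2
      · have := cnt_le_length k t
        omega
      · -- k + 1 ∈ S, contradiction
        refine hnotS (k+1) (by omega) ?_
        refine ⟨hkt.1, ?_, ?_⟩
        · intro x hx
          rcases List.mem_cons.1 hx with rfl | hx
          · omega
          · exact hent x hx
        · intro i hi1 hi2
          have hci := hcond i hi1 hi2
          rw [cnt_cons] at hci
          show i ≤ cnt i ((k+1) :: t)
          rw [cnt_cons]
          rcases lt_trichotomy i k with h | h | h
          · have h1' : ¬ k ≤ i := by omega
            have h2' : ¬ k + 1 ≤ i := by omega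
            simp [h1'] at hci; simp [h2']; omega
          · subst h
            have h2' : ¬ i + 1 ≤ i := by omega
            simp [h2']; omega
          · have h1' : k ≤ i := by omega
            have h2' : k + 1 ≤ i := by omega
            simp [h1'] at hci; simp [h2']; omega
    have hhigh : ∀ i, k < i → i ≤ n → i - 1 ≤ cnt i t := by
      intro i hik hin
      have := hcond i (by omega) hin
      rw [cnt_cons] at this
      simp [le_of_lt hik] at this
      omega
    exact ⟨hlt, hent, hlow, by omega, hhigh⟩
  · rintro ⟨t, ht, rfl⟩
    have hkt : IsPFList n (k :: t) := tail_cons_pf hk1 hkn ht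
    refine ⟨head_mono hkt hj hjk, rfl, ?_⟩
    rw [Kpi]
    have htail : (j :: t).tail = t := rfl
    rw [htail]
    set S : Set ℕ := {m | IsPFList n (m :: t)} with hS
    have hbdd : BddAbove S := ⟨n, fun m hm => (mem_KS_le hm).2⟩
    have hub : ∀ m ∈ S, m ≤ k := by
      intro m hm
      by_contra hcon
      have hmk : k < m := by omega
      have := hm.2.2 k hk1 hkn
      have hthis : k ≤ cnt k (m :: t) := this
      clear this
      rw [cnt_cons] at hthis
      rename' hthis => this
      simp [Nat.not_le.2 hmk] at this
      have := ht.2.2.2.1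
      omega
    exact le_antisymm (csSup_le ⟨k, hkt⟩ hub) (le_csSup hbdd hkt)


-- ===== Part 2: splitting machinery =====

lemma cnt_eq_countP (i : ℕ) (l : List ℕ) : cnt i l = l.countP (fun x => x ≤ i) :=
  (List.countP_eq_length_filter).symm

lemma filter_length_split {α : Type*} (p : α → Bool) (l : List α) :
    (l.filter p).length + (l.filter (fun x => !(p x))).length = l.length := by
  induction l with
  | nil => simp
  | cons a t ih =>
    simp only [List.filter_cons]
    cases h : p a <;> simp [h] <;> omega

lemma countP_split {α : Type*} (q p : α → Bool) (l : List α) :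
    l.countP q = (l.filter p).countP q + (l.filter (fun x => !(p x))).countP q := by
  induction l with
  | nil => simp
  | cons a t ih =>
    simp only [List.filter_cons]
    cases hp : p a <;> cases hq : q a <;>
      simp [List.countP_cons, hp, hq, ih] <;> omega

def Phi (p : ℕ → Bool) (t : List ℕ) : List Bool × List ℕ × List ℕ :=
  (t.map p, t.filter p, t.filter (fun x => !(p x)))

lemma Phi_injective (p : ℕ → Bool) : Function.Injective (Phi p) := by
  intro t t' h
  simp only [Phi, Prod.mk.injEq] at h
  obtain ⟨h1, h2, h3⟩ := h
  induction t generalizing t' with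
  | nil =>
    have := congrArg List.length h1
    simp at this
    exact (List.length_eq_zero_iff.1 this.symm).symm
  | cons a s ih =>
    cases t' with
    | nil => simp at h1
    | cons a' s' =>
      simp only [List.map_cons, List.cons.injEq] at h1
      obtain ⟨hpa, hmap⟩ := h1
      by_cases hb : p a = true
      · have hb' : p a' = true := by rw [← hpa]; exact hb
        rw [List.filter_cons_of_pos hb, List.filter_cons_of_pos hb'] at h2
        rw [List.filter_cons_of_neg (by simp [hb]), List.filter_cons_of_neg (by simp [hb'])] at h3
        obtain ⟨rfl, h2'⟩ := List.cons.injEq _ _ _ _ ▸ h2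
        rw [ih hmap h2' h3]
      · have hb0 : p a = false := by simpa using hb
        have hb' : p a' = false := by rw [← hpa]; exact hb0
        rw [List.filter_cons_of_neg (by simp [hb0]), List.filter_cons_of_neg (by simp [hb'])] at h2
        rw [List.filter_cons_of_pos (by simp [hb0]), List.filter_cons_of_pos (by simp [hb'])] at h3
        obtain ⟨rfl, h3'⟩ := List.cons.injEq _ _ _ _ ▸ h3
        rw [ih hmap h2 h3']

def mergeL : List Bool → List ℕ → List ℕ → List ℕ
  | [], _, _ => []
  | true :: bs, u, v => u.headI :: mergeL bs u.tail v
  | false :: bs, u, v => v.headI :: mergeL bs u v.tail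

lemma mergeL_phi (p : ℕ → Bool) : ∀ (b : List Bool) (u v : List ℕ),
    u.length = (b.filter (fun x => x)).length →
    v.length = (b.filter (fun x => !x)).length →
    (∀ x ∈ u, p x = true) → (∀ x ∈ v, p x = false) →
    Phi p (mergeL b u v) = (b, u, v) := by
  intro b
  induction b with
  | nil =>
    intro u v hu hv _ _
    simp only [List.filter_nil, List.length_nil, List.length_eq_zero_iff] at hu hv
    subst hu; subst hv
    rfl
  | cons x bs ih =>
    intro u v hu hv hpu hpv
    cases x with
    | true =>
      have e1 : (true :: bs).filter (fun x => x) = true :: bs.filter (fun x => x) := by simp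
      have e2 : (true :: bs).filter (fun x => !x) = bs.filter (fun x => !x) := by simp
      rw [e1, List.length_cons] at hu
      rw [e2] at hv
      cases u with
      | nil => simp at hu
      | cons a u' =>
        have hpa : p a = true := hpu a (List.mem_cons_self)
        have := ih u' v (by simpa using hu) hv
          (fun x hx => hpu x (List.mem_cons_of_mem _ hx)) hpv
        simp only [Phi, Prod.mk.injEq] at this ⊢
        obtain ⟨i1, i2, i3⟩ := this
        refine ⟨?_, ?_, ?_⟩
        · simp [mergeL, hpa, i1]
        · simp only [mergeL, List.headI, List.tail_cons]
          rw [List.filter_cons_of_pos hpa, i2]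
        · simp only [mergeL, List.headI, List.tail_cons]
          rw [List.filter_cons_of_neg (by simp [hpa]), i3]
    | false =>
      have e1 : (false :: bs).filter (fun x => x) = bs.filter (fun x => x) := by simp
      have e2 : (false :: bs).filter (fun x => !x) = false :: bs.filter (fun x => !x) := by simp
      rw [e1] at hu
      rw [e2, List.length_cons] at hv
      cases v with
      | nil => simp at hv
      | cons a v' =>
        have hpa : p a = false := hpv a (List.mem_cons_self)
        have := ih u v' hu (by simpa using hv)
          hpu (fun x hx => hpv x (List.mem_cons_of_mem _ hx))
        simp only [Phi, Prod.mk.injEq] at this ⊢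
        obtain ⟨i1, i2, i3⟩ := this
        refine ⟨?_, ?_, ?_⟩
        · simp [mergeL, hpa, i1]
        · simp only [mergeL, List.headI, List.tail_cons]
          rw [List.filter_cons_of_neg (by simp [hpa]), i2]
        · simp only [mergeL, List.headI, List.tail_cons]
          rw [List.filter_cons_of_pos (by simp [hpa]), i3]

lemma ncard_prod {α β : Type*} (A : Set α) (C : Set β) :
    (A ×ˢ C).ncard = A.ncard * C.ncard := by
  rw [← Nat.card_coe_set_eq, ← Nat.card_coe_set_eq, ← Nat.card_coe_set_eq,
    Nat.card_congr (Equiv.Set.prod A C), Nat.card_prod]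

lemma split_ncard (p : ℕ → Bool) (B : Set (List Bool)) (U V : Set (List ℕ))
    (hU : ∀ u ∈ U, ∀ x ∈ u, p x = true)
    (hV : ∀ v ∈ V, ∀ x ∈ v, p x = false)
    (hlenU : ∀ b ∈ B, ∀ u ∈ U, u.length = (b.filter (fun x => x)).length)
    (hlenV : ∀ b ∈ B, ∀ v ∈ V, v.length = (b.filter (fun x => !x)).length) :
    {t : List ℕ | Phi p t ∈ B ×ˢ U ×ˢ V}.ncard = B.ncard * U.ncard * V.ncard := by
  have himg : Phi p '' {t : List ℕ | Phi p t ∈ B ×ˢ U ×ˢ V} = B ×ˢ U ×ˢ V := by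
    apply Set.Subset.antisymm
    · rintro x ⟨t, ht, rfl⟩; exact ht
    · rintro ⟨b, u, v⟩ hx
      simp only [Set.mem_prod, Set.mem_setOf_eq] at hx
      obtain ⟨hb, hu, hv⟩ := hx
      refine ⟨mergeL b u v, ?_, ?_⟩ <;>
        simp only [Set.mem_setOf_eq,
          mergeL_phi p b u v (hlenU b hb u hu) (hlenV b hb v hv) (hU u hu) (hV v hv)]
      · exact ⟨hb, hu, hv⟩
  calc {t : List ℕ | Phi p t ∈ B ×ˢ U ×ˢ V}.ncard
      = (Phi p '' {t : List ℕ | Phi p t ∈ B ×ˢ U ×ˢ V}).ncard :=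
        (Set.ncard_image_of_injOn ((Phi_injective p).injOn)).symm
    _ = (B ×ˢ U ×ˢ V).ncard := by rw [himg]
    _ = B.ncard * U.ncard * V.ncard := by
        rw [ncard_prod, ncard_prod]; ring


-- ===== Part 3: TailSet decomposition =====

variable (n k : ℕ)

def Bset : Set (List Bool) :=
  {b | b.length = n - 1 ∧ (b.filter (fun x => x)).length = k - 1}

def Uset : Set (List ℕ) := {u | IsPFList (k - 1) u}

def Vset : Set (List ℕ) :=
  {v | v.length = n - k ∧ (∀ x ∈ v, k + 1 ≤ x ∧ x ≤ n) ∧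
    ∀ i, 1 ≤ i → i ≤ n - k → i ≤ cnt (i + k) v}

def pk : ℕ → Bool := fun x => decide (x < k)

lemma cnt_filter_lt {i : ℕ} (hik : i ≤ k - 1) (hk : 1 ≤ k) (t : List ℕ) :
    cnt i (t.filter (pk k)) = cnt i t := by
  rw [cnt_eq_countP, cnt_eq_countP, List.countP_filter]
  apply List.countP_congr
  intro x _
  simp only [pk, Bool.and_eq_true, decide_eq_true_eq]
  omega

lemma cnt_all_le {i : ℕ} {l : List ℕ} (h : ∀ x ∈ l, x ≤ i) : cnt i l = l.length := by
  rw [cnt_eq_countP, List.countP_eq_length]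
  intro a ha
  simpa using h a ha

lemma cnt_all_gt {i : ℕ} {l : List ℕ} (h : ∀ x ∈ l, i < x) : cnt i l = 0 := by
  rw [cnt_eq_countP, List.countP_eq_zero]
  intro a ha
  simpa using Nat.not_le.2 (h a ha)

lemma cnt_split (i : ℕ) (p : ℕ → Bool) (t : List ℕ) :
    cnt i t = cnt i (t.filter p) + cnt i (t.filter (fun x => !(p x))) := by
  rw [cnt_eq_countP, cnt_eq_countP, cnt_eq_countP]
  exact countP_split _ p t

lemma tailset_eq_preimage (hk : 1 ≤ k) (hkn : k ≤ n) :
    TailSet n k = {t | Phi (pk k) t ∈ Bset n k ×ˢ Uset k ×ˢ Vset n k} := by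
  ext t
  simp only [TailSet, Set.mem_setOf_eq, Phi, Set.mem_prod, Bset, Uset, Vset]
  constructor
  · rintro ⟨hl, he, h1, h2, h3⟩
    set u := t.filter (pk k) with hu
    set v := t.filter (fun x => !(pk k x)) with hv
    have hulen : u.length = k - 1 := by
      have hle : cnt (k-1) t ≤ cnt k t := cnt_mono (by omega) t
      have hge : k - 1 ≤ cnt (k-1) t := by
        rcases Nat.lt_or_ge k 2 with h | h
        · omega
        · exact h1 (k-1) (by omega) (by omega)
      have : u.length = cnt (k-1) t := by
        rw [hu, cnt_eq_countP, List.countP_eq_length_filter]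
        congr 1
        apply List.filter_congr
        intro x _
        simp only [pk, decide_eq_decide]
        omega
      omega
    have huv : u.length + v.length = t.length := filter_length_split _ t
    have hvmem : ∀ x ∈ v, k + 1 ≤ x ∧ x ≤ n := by
      intro x hx
      have hxt : x ∈ t := List.mem_of_mem_filter hx
      have hxk : ¬ (x < k) := by
        have := List.of_mem_filter hx
        simpa [pk] using this
      refine ⟨?_, (he x hxt).2⟩
      rcases Nat.lt_or_ge k x with h | h
      · omega
      · exfalso
        have hxek : x = k := by omega
        have hcv : 1 ≤ cnt k v := by
          rw [cnt_eq_countP]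
          have : v.countP (fun y => y ≤ k) ≠ 0 := by
            rw [Ne, List.countP_eq_zero]
            push_neg
            exact ⟨x, hx, by simp [hxek]⟩
          omega
        have hsplit := cnt_split k (pk k) t
        rw [← hu, ← hv] at hsplit
        have hcu : cnt k u = u.length := cnt_all_le (fun x hx => by
          have := List.of_mem_filter hx
          simp only [pk, decide_eq_true_eq] at this
          omega)
        omega
    refine ⟨⟨by rw [List.length_map]; omega, ?_⟩, ⟨hulen, ?_, ?_⟩, ?_, hvmem, ?_⟩
    · -- filter of map
      rw [List.filter_map]
      have : ((fun x : Bool => x) ∘ pk k) = pk k := rfl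
      rw [this, List.length_map, hulen]
    · intro x hx
      have hxt : x ∈ t := List.mem_of_mem_filter hx
      have hxk : x < k := by
        have := List.of_mem_filter hx
        simpa [pk] using this
      exact ⟨(he x hxt).1, by omega⟩
    · intro i hi1 hi2
      show i ≤ cnt i u
      rw [hu, cnt_filter_lt k hi2 hk]
      exact h1 i hi1 (by omega)
    · omega
    · intro i hi1 hi2
      have hsplit := cnt_split (i + k) (pk k) t
      rw [← hu, ← hv] at hsplit
      have hcu : cnt (i + k) u = u.length := cnt_all_le (fun x hx => by
        have := List.of_mem_filter hx
        simp only [pk, decide_eq_true_eq] at this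
        omega)
      have := h3 (i + k) (by omega) (by omega)
      omega
  · rintro ⟨⟨hblen, hbfilt⟩, ⟨hulen, hue, huc⟩, hvlen, hve, hvc⟩
    set u := t.filter (pk k) with hu
    set v := t.filter (fun x => !(pk k x)) with hv
    have hlen : t.length = n - 1 := by rw [← (List.length_map (pk k) : (t.map (pk k)).length = t.length)]; omega
    have hmem : ∀ x ∈ t, 1 ≤ x ∧ x ≤ n := by
      intro x hx
      by_cases hxk : x < k
      · have hxu : x ∈ u := List.mem_filter_of_mem hx (by simp [pk, hxk])
        have := hue x hxu
        omega
      · have hxv : x ∈ v := List.mem_filter_of_mem hx (by simp [pk, hxk])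
        have := hve x hxv
        omega
    have hcu_all : ∀ x ∈ u, x ≤ k - 1 := fun x hx => (hue x hx).2
    have hcv_all : ∀ x ∈ v, k + 1 ≤ x := fun x hx => (hve x hx).1
    refine ⟨hlen, hmem, ?_, ?_, ?_⟩
    · intro i hi1 hik
      have hsplit := cnt_split i (pk k) t
      rw [← hu, ← hv] at hsplit
      have hzero : cnt i v = 0 := cnt_all_gt (fun x hx => by
        have := hcv_all x hx; omega)
      have h5 : i ≤ cnt i u := huc i hi1 (by omega)
      have hcfl : cnt i u = cnt i t := by rw [hu]; exact cnt_filter_lt k (by omega) hk t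
      omega
    · have hsplit := cnt_split k (pk k) t
      rw [← hu, ← hv] at hsplit
      have hcu : cnt k u = u.length := cnt_all_le (fun x hx => by
        have := hcu_all x hx; omega)
      have hzero : cnt k v = 0 := cnt_all_gt (fun x hx => by
        have := hcv_all x hx; omega)
      omega
    · intro i hik hin
      have hsplit := cnt_split i (pk k) t
      rw [← hu, ← hv] at hsplit
      have hcu : cnt i u = u.length := cnt_all_le (fun x hx => by
        have := hcu_all x hx; omega)
      have := hvc (i - k) (by omega) (by omega)
      rw [Nat.sub_add_cancel (by omega : k ≤ i)] at this
      omega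


-- ===== Part 4: Vset as shifted parking functions; Bset count =====

lemma vset_eq_image (hkn : k ≤ n) :
    Vset n k = (List.map (· + k)) '' {w | IsPFList (n - k) w} := by
  ext v
  simp only [Vset, Set.mem_setOf_eq, Set.mem_image]
  constructor
  · rintro ⟨hl, he, hc⟩
    refine ⟨v.map (· - k), ⟨?_, ?_, ?_⟩, ?_⟩
    · simpa using hl
    · intro x hx
      obtain ⟨y, hy, rfl⟩ := List.mem_map.1 hx
      have := he y hy
      omega
    · intro i hi1 hi2
      have h0 := hc i hi1 hi2
      show i ≤ cnt i (v.map (· - k))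
      rw [cnt_eq_countP, List.countP_map]
      rw [cnt_eq_countP] at h0
      have hcongr : v.countP ((fun x => decide (x ≤ i)) ∘ (· - k)) =
          v.countP (fun x => decide (x ≤ i + k)) := by
        apply List.countP_congr
        intro x hx
        have := he x hx
        simp only [Function.comp_apply, decide_eq_true_eq]
        omega
      rw [hcongr]
      exact h0
    · rw [List.map_map]
      have : ((· + k) ∘ (· - k)) = fun x : ℕ => x - k + k := rfl
      rw [this]
      conv_rhs => rw [← List.map_id v]
      apply List.map_congr_left
      intro x hx
      have := he x hx
      simp; omega
  · rintro ⟨w, ⟨hl, he, hc⟩, rfl⟩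
    refine ⟨by simpa using hl, ?_, ?_⟩
    · intro x hx
      obtain ⟨y, hy, rfl⟩ := List.mem_map.1 hx
      have := he y hy
      omega
    · intro i hi1 hi2
      have := hc i hi1 hi2
      show i ≤ cnt (i + k) (w.map (· + k))
      rw [cnt_eq_countP, List.countP_map]
      rw [← List.countP_eq_length_filter] at this
      have hcongr : w.countP ((fun x => decide (x ≤ i + k)) ∘ (· + k)) =
          w.countP (fun x => decide (x ≤ i)) := by
        apply List.countP_congr
        intro x hx
        simp only [Function.comp_apply, decide_eq_true_eq]
        omega
      rw [hcongr]
      exact this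

lemma vset_ncard (hkn : k ≤ n) :
    (Vset n k).ncard = {w | IsPFList (n - k) w}.ncard := by
  rw [vset_eq_image n k hkn]
  apply Set.ncard_image_of_injOn
  apply Function.Injective.injOn
  rw [List.map_injective_iff]
  exact add_left_injective k

-- counting bool lists

lemma bool_finite (N : ℕ) :
    {b : List Bool | b.length = N ∧ (b.filter (fun x => x)).length = K}.Finite :=
  (List.finite_length_eq Bool N).subset (fun b hb => hb.1)

lemma bool_count : ∀ N K : ℕ,
    {b : List Bool | b.length = N ∧ (b.filter (fun x => x)).length = K}.ncard
      = N.choose K := by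
  intro N
  induction N with
  | zero =>
    intro K
    cases K with
    | zero =>
      have : {b : List Bool | b.length = 0 ∧ (b.filter (fun x => x)).length = 0} = {[]} := by
        ext b
        simp [List.length_eq_zero_iff]
        rintro rfl; simp
      rw [this, Set.ncard_singleton]
      rfl
    | succ K =>
      have : {b : List Bool | b.length = 0 ∧ (b.filter (fun x => x)).length = K + 1} = ∅ := by
        ext b
        simp [List.length_eq_zero_iff]
        rintro rfl; simp
      rw [this, Set.ncard_empty]
      simp
  | succ N ih =>
    intro K
    cases K with
    | zero =>
      have : {b : List Bool | b.length = N + 1 ∧ (b.filter (fun x => x)).length = 0} =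
          (List.cons false) '' {b : List Bool | b.length = N ∧ (b.filter (fun x => x)).length = 0} := by
        ext b
        simp only [Set.mem_setOf_eq, Set.mem_image]
        constructor
        · rintro ⟨hl, hf⟩
          cases b with
          | nil => simp at hl
          | cons x b' =>
            cases x with
            | true => simp at hf
            | false =>
              refine ⟨b', ⟨by simpa using hl, by simpa using hf⟩, rfl⟩
        · rintro ⟨b', ⟨hl, hf⟩, rfl⟩
          exact ⟨by simpa using hl, by simpa using hf⟩
      rw [this, Set.ncard_image_of_injOn (List.cons_injective.injOn), ih 0]
      simp
    | succ K =>
      have hset : {b : List Bool | b.length = N + 1 ∧ (b.filter (fun x => x)).length = K + 1} =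
          (List.cons true) '' {b : List Bool | b.length = N ∧ (b.filter (fun x => x)).length = K} ∪
          (List.cons false) '' {b : List Bool | b.length = N ∧ (b.filter (fun x => x)).length = K + 1} := by
        ext b
        simp only [Set.mem_setOf_eq, Set.mem_union, Set.mem_image]
        constructor
        · rintro ⟨hl, hf⟩
          cases b with
          | nil => simp at hl
          | cons x b' =>
            cases x with
            | true =>
              exact Or.inl ⟨b', ⟨by simpa using hl, by simpa using hf⟩, rfl⟩
            | false =>
              exact Or.inr ⟨b', ⟨by simpa using hl, by simpa using hf⟩, rfl⟩
        · rintro (⟨b', ⟨hl, hf⟩, rfl⟩ | ⟨b', ⟨hl, hf⟩, rfl⟩)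
          · exact ⟨by simpa using hl, by simpa using hf⟩
          · exact ⟨by simpa using hl, by simpa using hf⟩
      rw [hset, Set.ncard_union_eq ?disj
        (((List.finite_length_eq Bool N).subset (fun b hb => hb.1)).image _)
        (((List.finite_length_eq Bool N).subset (fun b hb => hb.1)).image _),
        Set.ncard_image_of_injOn (List.cons_injective.injOn),
        Set.ncard_image_of_injOn (List.cons_injective.injOn), ih K, ih (K+1)]
      · exact (Nat.choose_succ_succ N K).symm
      case disj =>
        rw [Set.disjoint_left]
        rintro b ⟨b', _, rfl⟩ ⟨b'', _, hb⟩
        simp at hb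

lemma tailset_ncard (hk : 1 ≤ k) (hkn : k ≤ n) :
    (TailSet n k).ncard = (n-1).choose (k-1) * {u | IsPFList (k-1) u}.ncard
      * {w | IsPFList (n-k) w}.ncard := by
  rw [tailset_eq_preimage n k hk hkn]
  rw [split_ncard (pk k) (Bset n k) (Uset k) (Vset n k)]
  · rw [← bool_count (n-1) (k-1), ← vset_ncard n k hkn]
    rfl
  · intro u hu x hx
    have := hu.2.1 x hx
    simp only [pk, decide_eq_true_eq]
    omega
  · intro v hv x hx
    have := hv.2.1 x hx
    simp only [pk, decide_eq_false_iff_not]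
    omega
  · intro b hb u hu
    rw [hu.1, hb.2]
  · intro b hb v hv
    have := filter_length_split (fun x : Bool => x) b
    have hb1 := hb.1
    have hb2 := hb.2
    have hv1 := hv.1
    have : (b.filter (fun x => !x)).length = b.length - (b.filter (fun x => x)).length := by
      omega
    omega


-- ===== Part 5: number of parking functions (Pollak's argument) =====

section Pollak

variable {m : ℕ}

def ArcCount (f : Fin m → ZMod (m+1)) (s : ZMod (m+1)) (j : ℕ) : ℕ :=
  (Finset.univ.filter (fun a => (s - f a).val < j)).card

def Emp (f : Fin m → ZMod (m+1)) (s : ZMod (m+1)) : Prop :=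
  ∀ j, 1 ≤ j → j ≤ m + 1 → ArcCount f s j < j

instance decEmp (f : Fin m → ZMod (m+1)) : DecidablePred (Emp f) := fun s =>
  decidable_of_iff (∀ j < m + 2, 1 ≤ j → ArcCount f s j < j)
    (by constructor
        · intro h j h1 h2; exact h j (by omega) h1
        · intro h j h1 h2; exact h j h2 (by omega))

def hfn (f : Fin m → ZMod (m+1)) (c : ZMod (m+1)) : ℕ :=
  (Finset.univ.filter (fun a => f a = c)).card

def Gfn (f : Fin m → ZMod (m+1)) (t : ℕ) : ℤ :=
  ∑ i ∈ Finset.range t, ((hfn f (-(i : ZMod (m+1))) : ℤ) - 1)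

lemma hfn_sum (f : Fin m → ZMod (m+1)) : ∑ c : ZMod (m+1), hfn f c = m := by
  have := Finset.card_eq_sum_card_fiberwise
    (f := f) (s := Finset.univ) (t := Finset.univ) (fun x _ => Finset.mem_univ _)
  simpa [hfn] using this.symm

lemma hfn_shift_sum (f : Fin m → ZMod (m+1)) (t : ℕ) :
    ∑ i ∈ Finset.range (m+1), hfn f (-((t + i : ℕ) : ZMod (m+1))) = m := by
  have key : ∑ i ∈ Finset.range (m+1), hfn f (-((t + i : ℕ) : ZMod (m+1)))
      = ∑ c : ZMod (m+1), hfn f c := by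
    apply Finset.sum_bij' (i := fun i _ => (-((t + i : ℕ) : ZMod (m+1))))
      (j := fun c _ => (-c - (t : ℕ)).val)
    · intro a ha; exact Finset.mem_univ _
    · intro c hc
      simp only [Finset.mem_range]
      exact ZMod.val_lt _
    · intro a ha
      simp only [Finset.mem_range] at ha
      push_cast
      have he : ((t : ZMod (m+1)) + (a : ZMod (m+1)) - (t : ZMod (m+1)))
          = ((a : ℕ) : ZMod (m+1)) := by ring
      rw [neg_neg, he, ZMod.val_cast_of_lt (by omega)]
    · intro c hc
      have : ((( -c - (t:ℕ)).val : ℕ) : ZMod (m+1)) = -c - (t : ℕ) := by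
        rw [ZMod.natCast_val, ZMod.cast_id]
      push_cast
      rw [this]; ring
    · intro a ha; rfl
  rw [key, hfn_sum]

lemma Gfn_add_period (f : Fin m → ZMod (m+1)) (t : ℕ) :
    Gfn f (t + (m+1)) = Gfn f t - 1 := by
  have h1 : Gfn f (t + (m+1)) = Gfn f t
      + ∑ i ∈ Finset.range (m+1), ((hfn f (-(((t + i : ℕ)) : ZMod (m+1))) : ℤ) - 1) := by
    unfold Gfn
    exact Finset.sum_range_add _ t (m+1)
  rw [h1, Finset.sum_sub_distrib, ← Nat.cast_sum, hfn_shift_sum f t]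
  simp only [Finset.sum_const, Finset.card_range, nsmul_eq_mul, mul_one]
  push_cast
  ring

lemma Gfn_add_mul_period (f : Fin m → ZMod (m+1)) (t q : ℕ) :
    Gfn f (t + q * (m+1)) = Gfn f t - q := by
  induction q with
  | zero => simp
  | succ q ih =>
    have : t + (q+1) * (m+1) = (t + q * (m+1)) + (m+1) := by ring
    rw [this, Gfn_add_period, ih]
    push_cast
    ring

lemma arc_eq_sum (f : Fin m → ZMod (m+1)) (s : ZMod (m+1)) (j : ℕ) (hj : j ≤ m + 1) :
    ArcCount f s j = ∑ i ∈ Finset.range j, hfn f (s - (i : ℕ)) := by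
  rw [ArcCount]
  rw [Finset.card_eq_sum_card_fiberwise
    (f := fun a => (s - f a).val) (t := Finset.range j)
    (fun a ha => Finset.mem_range.2 (Finset.mem_filter.1 ha).2)]
  apply Finset.sum_congr rfl
  intro i hi
  rw [Finset.mem_range] at hi
  congr 1
  rw [Finset.filter_filter]
  apply Finset.filter_congr
  intro a _
  simp only [hfn]
  constructor
  · rintro ⟨h1, h2⟩
    have : s - f a = (i : ZMod (m+1)) := by
      rw [← h2, ZMod.natCast_val, ZMod.cast_id]
    have : f a = s - (i : ℕ) := by
      rw [← this]; ring
    exact this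
  · intro h
    have hsf : s - f a = (i : ℕ) := by rw [h]; ring
    have hv : (s - f a).val = i := by rw [hsf, ZMod.val_cast_of_lt (by omega)]
    exact ⟨by omega, hv⟩

lemma arc_G (f : Fin m → ZMod (m+1)) (r j : ℕ) (hj : j ≤ m + 1) :
    (ArcCount f (-((r : ℕ) : ZMod (m+1))) j : ℤ) = Gfn f (r + j) - Gfn f r + j := by
  have hGG : Gfn f (r + j) = Gfn f r
      + ∑ i ∈ Finset.range j, ((hfn f (-(((r + i : ℕ)) : ZMod (m+1))) : ℤ) - 1) := by
    unfold Gfn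
    exact Finset.sum_range_add _ r j
  have hc2 : ∑ i ∈ Finset.range j, hfn f (-((r:ℕ) : ZMod (m+1)) - (i : ℕ))
      = ∑ i ∈ Finset.range j, hfn f (-(((r + i : ℕ)) : ZMod (m+1))) := by
    apply Finset.sum_congr rfl
    intro i _
    congr 1
    push_cast
    ring
  rw [arc_eq_sum f _ j hj, hGG, Finset.sum_sub_distrib, hc2]
  simp only [Finset.sum_const, Finset.card_range, nsmul_eq_mul, mul_one]
  push_cast
  ring


def Pp (f : Fin m → ZMod (m+1)) (r : ℕ) : Prop :=
  ∀ j, 1 ≤ j → j ≤ m + 1 → Gfn f (r + j) < Gfn f r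

lemma emp_iff_Pp (f : Fin m → ZMod (m+1)) (r : ℕ) :
    Emp f (-((r : ℕ) : ZMod (m+1))) ↔ Pp f r := by
  constructor
  · intro h j h1 h2
    have := h j h1 h2
    have harc := arc_G f r j h2
    omega
  · intro h j h1 h2
    have := h j h1 h2
    have harc := arc_G f r j h2
    omega

lemma Pp_extend {f : Fin m → ZMod (m+1)} {r : ℕ} (h : Pp f r) :
    ∀ t, r < t → Gfn f t < Gfn f r := by
  intro t ht
  set d := t - r - 1 with hd
  have hdm := Nat.div_add_mod d (m+1)
  have hmod : d % (m+1) < m + 1 := Nat.mod_lt _ (by omega)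
  have hteq : t = (r + (d % (m+1) + 1)) + (d / (m+1)) * (m+1) := by
    conv_lhs => rw [show t = r + 1 + d by omega, ← hdm]
    ring
  rw [hteq, Gfn_add_mul_period]
  have hP := h (d % (m+1) + 1) (by omega) (by omega)
  have hq : (0:ℤ) ≤ ((d / (m+1) : ℕ) : ℤ) := by positivity
  linarith

lemma Pp_exists_unique (f : Fin m → ZMod (m+1)) : ∃! r, r < m + 1 ∧ Pp f r := by
  classical
  have hrange : (Finset.range (m+1)).Nonempty := ⟨0, by simp⟩
  set F := (Finset.range (m+1)).image (Gfn f) with hF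
  have hFne : F.Nonempty := hrange.image _
  set Mx := F.max' hFne with hMx
  set R := (Finset.range (m+1)).filter (fun r => Gfn f r = Mx) with hR
  have hRne : R.Nonempty := by
    have hmem := F.max'_mem hFne
    obtain ⟨r0, hr0, hGr0⟩ := Finset.mem_image.1 hmem
    rw [← hMx] at hGr0
    exact ⟨r0, Finset.mem_filter.2 ⟨hr0, hGr0⟩⟩
  set r := R.max' hRne with hr
  have hrR : r ∈ R := R.max'_mem hRne
  have hrlt : r < m + 1 := Finset.mem_range.1 (Finset.mem_filter.1 hrR).1
  have hGr : Gfn f r = Mx := (Finset.mem_filter.1 hrR).2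
  have hmax : ∀ t, t < m + 1 → Gfn f t ≤ Mx := fun t ht =>
    F.le_max' _ (Finset.mem_image.2 ⟨t, Finset.mem_range.2 ht, rfl⟩)
  have hlast : ∀ t, t < m + 1 → Gfn f t = Mx → t ≤ r := fun t ht hG =>
    R.le_max' t (Finset.mem_filter.2 ⟨Finset.mem_range.2 ht, hG⟩)
  have hPr : Pp f r := by
    intro j h1 h2
    by_cases hc : r + j < m + 1
    · have hle := hmax (r+j) hc
      rcases eq_or_lt_of_le hle with heq | hlt
      · exfalso
        have := hlast (r+j) hc heq
        omega
      · omega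
    · have hs : r + j = (r + j - (m+1)) + (m+1) := by omega
      rw [hs, Gfn_add_period]
      have hle : Gfn f (r + j - (m+1)) ≤ Mx := hmax _ (by omega)
      omega
  refine ⟨r, ⟨hrlt, hPr⟩, ?_⟩
  rintro r' ⟨hr'lt, hPr'⟩
  by_contra hne
  rcases Nat.lt_or_ge r' r with hlt | hge
  · -- r' < r
    have hA : Gfn f r < Gfn f r' := Pp_extend hPr' r hlt
    have hB : Gfn f (r' + (m+1)) < Gfn f r := Pp_extend hPr (r' + (m+1)) (by omega)
    rw [Gfn_add_period] at hB
    omega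
  · have hlt : r < r' := by omega
    have hA : Gfn f r' < Gfn f r := Pp_extend hPr r' hlt
    have hB : Gfn f (r + (m+1)) < Gfn f r' := Pp_extend hPr' (r + (m+1)) (by omega)
    rw [Gfn_add_period] at hB
    omega

lemma neg_val_natCast (s : ZMod (m+1)) : s = -((((-s).val : ℕ)) : ZMod (m+1)) := by
  rw [ZMod.natCast_val, ZMod.cast_id, neg_neg]

lemma emp_exists_unique (f : Fin m → ZMod (m+1)) : ∃! s, Emp f s := by
  obtain ⟨r, ⟨hrlt, hPr⟩, hu⟩ := Pp_exists_unique f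
  refine ⟨-((r : ℕ) : ZMod (m+1)), (emp_iff_Pp f r).2 hPr, ?_⟩
  intro s hs
  have hrep := neg_val_natCast s
  rw [hrep] at hs
  have hP' : Pp f ((-s).val) := (emp_iff_Pp f _).1 hs
  have := hu ((-s).val) ⟨ZMod.val_lt _, hP'⟩
  rw [hrep, this]

lemma emp_translate (f : Fin m → ZMod (m+1)) (c s : ZMod (m+1)) :
    Emp (fun a => f a + c) (s + c) ↔ Emp f s := by
  have harc : ∀ j, ArcCount (fun a => f a + c) (s + c) j = ArcCount f s j := by
    intro j
    unfold ArcCount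
    congr 1
    apply Finset.filter_congr
    intro a _
    have : s + c - (f a + c) = s - f a := by ring
    rw [this]
  constructor <;> intro h j h1 h2 <;> have := h j h1 h2
  · rwa [harc] at this
  · rwa [harc]

lemma card_emp_fiber (s : ZMod (m+1)) :
    (Finset.univ.filter (fun f : Fin m → ZMod (m+1) => Emp f s)).card
      = (Finset.univ.filter (fun f : Fin m → ZMod (m+1) => Emp f 0)).card := by
  classical
  apply Finset.card_bij' (i := fun f _ => fun a => f a + (-s))
    (j := fun g _ => fun a => g a + s)
  · intro f hf
    simp only [Finset.mem_filter, Finset.mem_univ, true_and] at hf ⊢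
    have := (emp_translate f (-s) s).2 hf
    simpa using this
  · intro g hg
    simp only [Finset.mem_filter, Finset.mem_univ, true_and] at hg ⊢
    have := (emp_translate g s 0).2 hg
    simpa using this
  · intro f _; funext a; ring
  · intro g _; funext a; ring

noncomputable def Efn (f : Fin m → ZMod (m+1)) : ZMod (m+1) :=
  Finset.choose (fun s => Emp f s) Finset.univ (by
    obtain ⟨s, hs, hu⟩ := emp_exists_unique f
    exact ⟨s, ⟨Finset.mem_univ _, hs⟩, fun y hy => hu y hy.2⟩)

lemma Efn_eq_iff (f : Fin m → ZMod (m+1)) (s : ZMod (m+1)) :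
    Efn f = s ↔ Emp f s := by
  constructor
  · rintro rfl
    exact Finset.choose_property _ _ _
  · intro h
    obtain ⟨s0, hs0, hu⟩ := emp_exists_unique f
    rw [hu s h, ← hu (Efn f) (Finset.choose_property _ _ _)]

lemma card_universe :
    (m+1)^m = (m+1) *
      (Finset.univ.filter (fun f : Fin m → ZMod (m+1) => Emp f 0)).card := by
  classical
  have h1 : Fintype.card (Fin m → ZMod (m+1)) = (m+1)^m := by
    rw [Fintype.card_fun]
    simp [ZMod.card]
  have h2 := Finset.card_eq_sum_card_fiberwise
    (f := fun f : Fin m → ZMod (m+1) => Efn f) (s := Finset.univ) (t := Finset.univ)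
    (fun x _ => Finset.mem_univ _)
  have h3 : ∀ s : ZMod (m+1),
      (Finset.univ.filter (fun f : Fin m → ZMod (m+1) => Efn f = s)).card
        = (Finset.univ.filter (fun f : Fin m → ZMod (m+1) => Emp f 0)).card := by
    intro s
    rw [← card_emp_fiber s]
    congr 1
    apply Finset.filter_congr
    intro f _
    exact Efn_eq_iff f s
  rw [Finset.card_univ, h1] at h2
  rw [h2]
  rw [Finset.sum_congr rfl (fun s _ => h3 s)]
  simp [Finset.card_univ, ZMod.card]


lemma filter_ofFn_card {N : ℕ} {α : Type*} (g : Fin N → α) (q : α → Bool) :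
    ((List.ofFn g).filter q).length = (Finset.univ.filter (fun i => q (g i))).card := by
  rw [List.ofFn_eq_map, List.filter_map, List.length_map, ← List.countP_eq_length_filter]
  have h : (Finset.univ : Finset (Fin N)).val = (List.finRange N : Multiset (Fin N)) := by
    rw [Fin.univ_def]
  have h2 : (Finset.univ.filter (fun i => q (g i))).card
      = Multiset.countP (fun i => q (g i)) (Finset.univ : Finset (Fin N)).val := by
    simp [Finset.filter, Finset.card, Multiset.countP_eq_card_filter]
  rw [h2, h, Multiset.countP_eq_card_filter]
  simp only [Multiset.filter_coe, Multiset.coe_card]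
  rw [List.countP_eq_length_filter]
  congr 1
  apply List.filter_congr
  intro x _
  simp [Function.comp]

def Psi (f : Fin m → ZMod (m+1)) : List ℕ := List.ofFn (fun a => (f a).val)

lemma psi_length (f : Fin m → ZMod (m+1)) : (Psi f).length = m := by simp [Psi]

lemma psi_cnt (f : Fin m → ZMod (m+1)) (i : ℕ) :
    cnt i (Psi f) = (Finset.univ.filter (fun a => (f a).val ≤ i)).card := by
  rw [cnt, Psi, filter_ofFn_card]
  congr 1
  apply Finset.filter_congr
  intro a _
  simp

lemma val_one_le {f : Fin m → ZMod (m+1)} (hne : ∀ a, f a ≠ 0) (a : Fin m) :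
    1 ≤ (f a).val :=
  Nat.one_le_iff_ne_zero.2 (fun h0 => hne a ((ZMod.val_eq_zero _).1 h0))

lemma neg_val_eq {f : Fin m → ZMod (m+1)} (hne : ∀ a, f a ≠ 0) (a : Fin m) :
    ((0 : ZMod (m+1)) - f a).val = m + 1 - (f a).val := by
  rw [zero_sub, ZMod.neg_val]
  simp [hne a]

lemma emp_iff_pf (f : Fin m → ZMod (m+1)) : Emp f 0 ↔ IsPFList m (Psi f) := by
  constructor
  · intro h
    have hne : ∀ a, f a ≠ 0 := by
      intro a ha
      have h1 := h 1 le_rfl (by omega)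
      have hmem : a ∈ Finset.univ.filter
          (fun a => ((0:ZMod (m+1)) - f a).val < 1) := by
        simp [ha]
      have hpos : 0 < ArcCount f 0 1 := Finset.card_pos.2 ⟨a, hmem⟩
      omega
    refine ⟨psi_length f, ?_, ?_⟩
    · intro x hx
      rw [Psi, List.mem_ofFn] at hx
      obtain ⟨a, rfl⟩ := hx
      have hlt := ZMod.val_lt (f a)
      refine ⟨?_, ?_⟩
      · show 1 ≤ (f a).val
        exact val_one_le hne a
      · show (f a).val ≤ m
        omega
    · intro i h1 h2
      show i ≤ cnt i (Psi f)
      rw [psi_cnt]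
      have harc := h (m+1-i) (by omega) (by omega)
      have hset : Finset.univ.filter (fun a => ((0:ZMod (m+1)) - f a).val < m+1-i)
          = Finset.univ.filter (fun a => ¬ ((f a).val ≤ i)) := by
        apply Finset.filter_congr
        intro a _
        have hval := ZMod.val_lt (f a)
        have h1a := val_one_le hne a
        rw [neg_val_eq hne a]
        constructor <;> intro hh
        · omega
        · omega
      have hsplit := Finset.card_filter_add_card_filter_not
        (s := (Finset.univ : Finset (Fin m))) (fun a => (f a).val ≤ i)
      have hcu : (Finset.univ : Finset (Fin m)).card = m := by simp
      unfold ArcCount at harc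
      rw [hset] at harc
      omega
  · rintro ⟨hlen, hmem, hcnt⟩
    have hvm : ∀ a, 1 ≤ (f a).val ∧ (f a).val ≤ m := by
      intro a
      apply hmem
      rw [Psi, List.mem_ofFn]
      exact ⟨a, rfl⟩
    have hne : ∀ a, f a ≠ 0 := by
      intro a h0
      have := (hvm a).1
      rw [h0, ZMod.val_zero] at this
      omega
    intro j hj1 hj2
    have hset : Finset.univ.filter (fun a => ((0:ZMod (m+1)) - f a).val < j)
        = Finset.univ.filter (fun a => ¬((f a).val ≤ m + 1 - j)) := by
      apply Finset.filter_congr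
      intro a _
      have hval := (hvm a)
      rw [neg_val_eq hne a]
      constructor <;> intro hh
      · omega
      · omega
    unfold ArcCount
    rw [hset]
    have hsplit := Finset.card_filter_add_card_filter_not
      (s := (Finset.univ : Finset (Fin m))) (fun a => (f a).val ≤ m + 1 - j)
    have hcu : (Finset.univ : Finset (Fin m)).card = m := by simp
    rcases Nat.lt_or_ge j (m+1) with hj | hj
    · have hc := hcnt (m+1-j) (by omega) (by omega)
      have hc2 : m + 1 - j ≤ cnt (m+1-j) (Psi f) := hc
      rw [psi_cnt] at hc2
      omega
    · have hle : (Finset.univ.filter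
          (fun a => ¬((f a).val ≤ m + 1 - j))).card ≤ m := by
        calc _ ≤ (Finset.univ : Finset (Fin m)).card := Finset.card_filter_le _ _
        _ = m := hcu
      omega

lemma psi_injective : Function.Injective (Psi (m := m)) := by
  intro f g h
  rw [Psi, Psi] at h
  have := List.ofFn_injective h
  funext a
  exact ZMod.val_injective _ (congrFun this a)

lemma pf_set_eq_image :
    {l : List ℕ | IsPFList m l} = Psi '' {f : Fin m → ZMod (m+1) | Emp f 0} := by
  ext l
  simp only [Set.mem_setOf_eq, Set.mem_image]
  constructor
  · intro hl
    refine ⟨fun a => ((l.getD a 1 : ℕ) : ZMod (m+1)), ?_⟩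
    have hpsi : Psi (fun a => ((l.getD a 1 : ℕ) : ZMod (m+1))) = l := by
      apply List.ext_getElem (by simp [Psi, hl.1])
      intro i h1 h2
      simp only [Psi, List.getElem_ofFn]
      rw [List.getD_eq_getElem l 1 h2]
      have hmem := hl.2.1 l[i] (List.getElem_mem h2)
      rw [ZMod.val_cast_of_lt (by omega)]
    refine ⟨?_, hpsi⟩
    show Emp _ 0
    rw [emp_iff_pf, hpsi]
    exact hl
  · rintro ⟨f, hf, rfl⟩
    exact (emp_iff_pf f).1 hf

lemma pf_ncard_aux : (m+1) * {l : List ℕ | IsPFList m l}.ncard = (m+1)^m := by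
  classical
  rw [pf_set_eq_image, Set.ncard_image_of_injOn (psi_injective.injOn)]
  have hs : {f : Fin m → ZMod (m+1) | Emp f 0}
      = ↑(Finset.univ.filter (fun f : Fin m → ZMod (m+1) => Emp f 0)) := by
    ext f; simp
  rw [hs, Set.ncard_coe_finset]
  exact (card_universe).symm

end Pollak

lemma pf_zero : {l : List ℕ | IsPFList 0 l} = {([] : List ℕ)} := by
  ext l
  simp only [Set.mem_setOf_eq, Set.mem_singleton_iff, IsPFList]
  constructor
  · rintro ⟨h1, _, _⟩
    exact List.length_eq_zero_iff.1 h1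
  · rintro rfl
    exact ⟨rfl, by simp, by omega⟩

lemma pf_ncard (m : ℕ) : {l : List ℕ | IsPFList m l}.ncard = (m+1)^(m-1) := by
  cases m with
  | zero =>
    rw [pf_zero, Set.ncard_singleton]
    norm_num
  | succ m' =>
    have h := pf_ncard_aux (m := m'+1)
    have hp : (m'+1+1)^(m'+1) = (m'+1+1) * (m'+1+1)^(m'+1-1) := by
      rw [Nat.add_sub_cancel, pow_succ']
    rw [hp] at h
    exact Nat.eq_of_mul_eq_mul_left (by omega) h

lemma main_count {j k n : ℕ} (hj : 1 ≤ j) (hjk : j ≤ k) (hkn : k ≤ n) :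
    {l : List ℕ | IsPFList n l ∧ l.headI = j ∧ Kpi n l = k}.ncard
      = (n-1).choose (k-1) * k^(k-2) * (n-k+1)^(n-k-1) := by
  have hk1 : 1 ≤ k := le_trans hj hjk
  rw [main_set_eq hj hjk hkn,
    Set.ncard_image_of_injOn (List.cons_injective.injOn),
    tailset_ncard n k hk1 hkn, pf_ncard (k-1), pf_ncard (n-k)]
  have e1 : k - 1 + 1 = k := by omega
  have e2 : k - 1 - 1 = k - 2 := by omega
  rw [e1, e2]


-- ===== Part 7: asymptotics =====

section Asymptotics

open Filter Real

lemma aux_div_tendsto (c : ℝ) :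
    Tendsto (fun n : ℕ => c / ((n:ℝ)+1)) atTop (nhds 0) := by
  have h := (tendsto_const_div_atTop_nhds_zero_nat c).comp (tendsto_add_atTop_nat 1)
  apply h.congr
  intro n
  simp [Function.comp]

lemma one_sub_tendsto (c : ℝ) :
    Tendsto (fun n : ℕ => 1 - c/((n:ℝ)+1)) atTop (nhds 1) := by
  have := (tendsto_const_nhds :
    Tendsto (fun _ : ℕ => (1:ℝ)) atTop (nhds 1)).sub (aux_div_tendsto c)
  simpa using this

lemma exp_factor_tendsto (k : ℕ) :
    Tendsto (fun n : ℕ => (1 - (k:ℝ)/((n:ℝ)+1))^(n+1)) atTop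
      (nhds (Real.exp (-(k:ℝ)))) := by
  have h := (Real.tendsto_one_add_div_pow_exp (-(k:ℝ))).comp (tendsto_add_atTop_nat 1)
  apply h.congr
  intro n
  simp only [Function.comp]
  have hc : ((n + 1 : ℕ) : ℝ) = (n:ℝ) + 1 := by push_cast; ring
  rw [hc]
  congr 1
  ring

lemma inv_factor_tendsto (k e : ℕ) :
    Tendsto (fun n : ℕ => ((1 - (k:ℝ)/((n:ℝ)+1))⁻¹)^e) atTop (nhds 1) := by
  have h := ((one_sub_tendsto (k:ℝ)).inv₀ one_ne_zero).pow e
  simpa using h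

lemma ratio_tendsto (c : ℝ) :
    Tendsto (fun n : ℕ => ((n:ℝ) - c)/((n:ℝ)+1)) atTop (nhds 1) := by
  apply (one_sub_tendsto (c+1)).congr
  intro n
  have hn : ((n:ℝ)+1) ≠ 0 := by positivity
  field_simp
  ring

lemma prod_ratio_tendsto (K : ℕ) :
    Tendsto (fun n : ℕ => ∏ i ∈ Finset.range K, (((n:ℝ) - 1 - i)/((n:ℝ)+1)))
      atTop (nhds 1) := by
  have h := tendsto_finset_prod (f := fun (i : ℕ) (n : ℕ) => ((n:ℝ) - 1 - i)/((n:ℝ)+1))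
    (x := atTop) (a := fun _ => (1:ℝ)) (Finset.range K)
    (fun i _ => by
      have := ratio_tendsto (1 + (i:ℝ))
      apply this.congr
      intro n
      ring_nf)
  simpa using h

lemma nat_pow_pred {k : ℕ} (hk : 1 ≤ k) : k^(k-1) = k^(k-2)*k := by
  match k, hk with
  | 1, _ => simp
  | (k+2), _ =>
    rw [show k+2-1 = k+1 by omega, show k+2-2 = k by omega, pow_succ]

lemma limit_identity {k : ℕ} (hk : 1 ≤ k) :
    (k:ℝ)^(k-2)/(Nat.factorial (k-1) : ℝ) * Real.exp (-(k:ℝ))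
      = Real.exp (-(k:ℝ)) * (k : ℝ) ^ (k - 1) / (Nat.factorial k : ℝ) := by
  have hf1 : (Nat.factorial (k-1) : ℝ) ≠ 0 := by
    exact_mod_cast Nat.factorial_ne_zero _
  have hf2 : (Nat.factorial k : ℝ) ≠ 0 := by
    exact_mod_cast Nat.factorial_ne_zero _
  have hk2 : (Nat.factorial k : ℝ) = (k:ℝ) * (Nat.factorial (k-1) : ℝ) := by
    have hkk : k = (k-1) + 1 := by omega
    rw [hkk, Nat.factorial_succ]
    push_cast
    ring
  have hp : (k:ℝ)^(k-1) = (k:ℝ)^(k-2) * (k:ℝ) := by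
    exact_mod_cast congrArg (Nat.cast (R := ℝ)) (nat_pow_pred hk)
  rw [hp, hk2]
  field_simp

lemma G_tendsto (k : ℕ) (hk : 1 ≤ k) :
    Tendsto (fun n : ℕ =>
      ((k:ℝ)^(k-2)/(Nat.factorial (k-1) : ℝ)) * ((n:ℝ)/((n:ℝ)+1))
        * (∏ i ∈ Finset.range (k-1), (((n:ℝ) - 1 - i)/((n:ℝ)+1)))
        * ((1 - (k:ℝ)/((n:ℝ)+1))^(n+1) * ((1 - (k:ℝ)/((n:ℝ)+1))⁻¹)^(k+2)))
      atTop (nhds (Real.exp (-(k:ℝ)) * (k : ℝ) ^ (k - 1) / (Nat.factorial k : ℝ))) := by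
  rw [← limit_identity hk]
  have h1 : Tendsto (fun n : ℕ => (n:ℝ)/((n:ℝ)+1)) atTop (nhds 1) := by
    have := ratio_tendsto 0
    apply this.congr
    intro n; ring_nf
  have hfull := (((tendsto_const_nhds :
      Tendsto (fun _ : ℕ => (k:ℝ)^(k-2)/(Nat.factorial (k-1) : ℝ)) atTop
        (nhds ((k:ℝ)^(k-2)/(Nat.factorial (k-1) : ℝ)))).mul h1).mul
      (prod_ratio_tendsto (k-1))).mul
      ((exp_factor_tendsto k).mul (inv_factor_tendsto k (k+2)))
  have hval : (k:ℝ)^(k-2)/(Nat.factorial (k-1) : ℝ) * 1 * 1 * (Real.exp (-(k:ℝ)) * 1)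
      = (k:ℝ)^(k-2)/(Nat.factorial (k-1) : ℝ) * Real.exp (-(k:ℝ)) := by ring
  rw [← hval]
  exact hfull

end Asymptotics


section Final

open Filter Real

lemma eventual_eq {k : ℕ} (hk : 1 ≤ k) {n : ℕ} (hn : 2*k + 2 ≤ n) :
    (n : ℝ) * ((((n-1).choose (k-1) * k^(k-2) * (n-k+1)^(n-k-1) : ℕ) : ℝ)
        / ((n : ℝ) + 1) ^ (n - 1))
      = ((k:ℝ)^(k-2)/(Nat.factorial (k-1) : ℝ)) * ((n:ℝ)/((n:ℝ)+1))
        * (∏ i ∈ Finset.range (k-1), (((n:ℝ) - 1 - i)/((n:ℝ)+1)))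
        * ((1 - (k:ℝ)/((n:ℝ)+1))^(n+1) * ((1 - (k:ℝ)/((n:ℝ)+1))⁻¹)^(k+2)) := by
  have hB : ((n:ℝ)+1) ≠ 0 := by positivity
  have hkn : (k:ℝ) ≤ (n:ℝ) := by exact_mod_cast (by omega : k ≤ n)
  have hA0 : (0:ℝ) < (n:ℝ) - k + 1 := by linarith
  have hbase : 1 - (k:ℝ)/((n:ℝ)+1) = ((n:ℝ) - k + 1)/((n:ℝ)+1) := by
    field_simp
    ring
  have hbne : ((n:ℝ) - k + 1)/((n:ℝ)+1) ≠ 0 := by positivity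
  have hexpsplit : n + 1 = (n - k - 1) + (k + 2) := by omega
  have hpowsplit : (1 - (k:ℝ)/((n:ℝ)+1))^(n+1) * ((1 - (k:ℝ)/((n:ℝ)+1))⁻¹)^(k+2)
      = (((n:ℝ) - k + 1)/((n:ℝ)+1))^(n-k-1) := by
    rw [hbase, inv_pow, hexpsplit, pow_add, mul_assoc,
      mul_inv_cancel₀ (pow_ne_zero _ hbne), mul_one]
  rw [hpowsplit]
  have hcast1 : (((n-1).choose (k-1) * k^(k-2) * (n-k+1)^(n-k-1) : ℕ) : ℝ)
      = ((n-1).choose (k-1) : ℝ) * (k:ℝ)^(k-2) * (((n-k+1 : ℕ)):ℝ)^(n-k-1) := by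
    push_cast
    ring
  have hcast2 : (((n-k+1 : ℕ)):ℝ) = (n:ℝ) - k + 1 := by
    push_cast [Nat.cast_sub (by omega : k ≤ n)]
    ring
  have hdesc : ((n-1).descFactorial (k-1) : ℝ)
      = ∏ i ∈ Finset.range (k-1), ((n:ℝ) - 1 - i) := by
    rw [Nat.descFactorial_eq_prod_range, Nat.cast_prod]
    apply Finset.prod_congr rfl
    intro i hi
    rw [Finset.mem_range] at hi
    push_cast [Nat.cast_sub (by omega : i ≤ n - 1), Nat.cast_sub (by omega : 1 ≤ n)]
    ring
  have hfne : (Nat.factorial (k-1) : ℝ) ≠ 0 := by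
    exact_mod_cast Nat.factorial_ne_zero _
  have hchoose0 : (∏ i ∈ Finset.range (k-1), ((n:ℝ) - 1 - i))
      = ((n-1).choose (k-1) : ℝ) * (Nat.factorial (k-1) : ℝ) := by
    rw [← hdesc, Nat.descFactorial_eq_factorial_mul_choose]
    push_cast
    ring
  have hchoose : ((n-1).choose (k-1) : ℝ)
      = (∏ i ∈ Finset.range (k-1), ((n:ℝ) - 1 - i)) / (Nat.factorial (k-1) : ℝ) := by
    rw [hchoose0]
    field_simp
  have hprodq : (∏ i ∈ Finset.range (k-1), (((n:ℝ) - 1 - i)/((n:ℝ)+1)))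
      = (∏ i ∈ Finset.range (k-1), ((n:ℝ) - 1 - i)) / ((n:ℝ)+1)^(k-1) := by
    rw [Finset.prod_div_distrib, Finset.prod_const, Finset.card_range]
  have hpowB : ((n:ℝ)+1)^(n-1) = ((n:ℝ)+1)^(n-k-1) * ((n:ℝ)+1)^(k-1) * ((n:ℝ)+1) := by
    rw [← pow_add, ← pow_succ]
    congr 1
    omega
  rw [hcast1, hcast2, hchoose, hprodq, hpowB, div_pow]
  have hBpow1 : ((n:ℝ)+1)^(n-k-1) ≠ 0 := pow_ne_zero _ hB
  have hBpow2 : ((n:ℝ)+1)^(k-1) ≠ 0 := pow_ne_zero _ hB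
  field_simp

end Final

end PFAux


theorem stmt5 (j k : ℕ) (hj : 1 ≤ j) (hjk : j ≤ k) :
    Filter.Tendsto
      (fun n : ℕ =>
        (n : ℝ) *
          ((Set.ncard {l : List ℕ | IsPFList n l ∧ l.headI = j ∧ Kpi n l = k} : ℝ) /
            ((n : ℝ) + 1) ^ (n - 1)))
      Filter.atTop
      (nhds (Real.exp (-(k : ℝ)) * (k : ℝ) ^ (k - 1) / (Nat.factorial k : ℝ))) := by
  have hk : 1 ≤ k := le_trans hj hjk
  apply Filter.Tendsto.congr' _ (PFAux.G_tendsto k hk)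
  filter_upwards [Filter.eventually_ge_atTop (2*k+2)] with n hn
  rw [show Set.ncard {l : List ℕ | IsPFList n l ∧ l.headI = j ∧ Kpi n l = k}
      = (n-1).choose (k-1) * k^(k-2) * (n-k+1)^(n-k-1) from
    PFAux.main_count hj hjk (by omega : k ≤ n)]
  exact (PFAux.eventual_eq hk hn).symm
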